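/- If a random variable X on the positive integers satisfies Pr[X ≥ t√n] ≤ e^{−0.9t+0.1} for all t ≥ 1, then E[X · log₂⌈X/√n⌉] ≤ 3e·√n. -/

import Mathlib

open MeasureTheory

private lemma nat_le_two_pow_pred {c : ℕ} (hc : 1 ≤ c) : c ≤ 2 ^ (c - 1) := by
  obtain ⟨d, rfl⟩ : ∃ d, c = d + 1 := ⟨c - 1, (Nat.succ_pred_eq_of_pos hc).symm⟩
  simpa using Nat.lt_two_pow_self (n := d)

private lemma logb_le_sub_one {c : ℕ} (hc : 1 ≤ c) :
    Real.logb 2 (c : ℝ) ≤ (c : ℝ) - 1 := by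
  have h1 : (c : ℝ) ≤ (2 : ℝ) ^ (c - 1 : ℕ) := by
    exact_mod_cast nat_le_two_pow_pred hc
  have hcpos : (0 : ℝ) < (c : ℝ) := by exact_mod_cast hc
  have h2 : Real.logb 2 (c : ℝ) ≤ Real.logb 2 ((2 : ℝ) ^ (c - 1 : ℕ)) :=
    Real.logb_le_logb_of_le one_lt_two hcpos h1
  have h3 : Real.logb 2 ((2 : ℝ) ^ (c - 1 : ℕ)) = ((c - 1 : ℕ) : ℝ) := by
    rw [Real.logb_pow, Real.logb_self_eq_one (by norm_num), mul_one]
  rw [h3, Nat.cast_sub hc, Nat.cast_one] at h2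
  exact h2

theorem stmt_6 (n : ℕ) (hn : 1 ≤ n)
    (μ : Measure ℕ) [IsProbabilityMeasure μ]
    (hsupp : μ (Set.Icc 1 (n - 1))ᶜ = 0)
    (htail : ∀ t : ℝ, 1 ≤ t →
      (μ {k | t * Real.sqrt n ≤ (k : ℝ)}).toReal ≤ Real.exp (-0.9 * t + 0.1)) :
    ∫ k, (k : ℝ) * Real.logb 2 ((⌈(k : ℝ) / Real.sqrt n⌉ : ℤ) : ℝ) ∂μ
      ≤ 3 * Real.exp 1 * Real.sqrt n := by
  set s : ℝ := Real.sqrt n with hs_def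
  have hs1 : 1 ≤ s := Real.one_le_sqrt.mpr (by exact_mod_cast hn)
  have hs0 : (0 : ℝ) < s := lt_of_lt_of_le one_pos hs1
  set f : ℕ → ℝ := fun k => (k : ℝ) * Real.logb 2 ((⌈(k : ℝ) / s⌉ : ℤ) : ℝ) with hf_def
  set K : Finset ℕ := Finset.Icc 1 (n - 1) with hK_def
  have hKcoe : (↑K : Set ℕ) = Set.Icc 1 (n - 1) := Finset.coe_Icc _ _
  -- Step A : integral is a finite sum
  have hae : ∀ᵐ x ∂μ, x ∈ Set.Icc 1 (n - 1) := by
    rw [MeasureTheory.ae_iff]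
    exact hsupp
  have hres : μ.restrict (Set.Icc 1 (n - 1)) = μ :=
    Measure.restrict_eq_self_of_ae_mem hae
  have hint : IntegrableOn f (↑K : Set ℕ) μ := by
    have h := (integrableOn_finite_biUnion (f := f) (μ := μ)
        (t := fun x => ({x} : Set ℕ)) K.finite_toSet).2
      fun i _ => (integrableOn_singleton_iff (by simp)).mpr (Or.inr (measure_lt_top μ _))
    rwa [Set.biUnion_of_singleton] at h
  have hInt_eq : ∫ k, f k ∂μ = ∑ k ∈ K, (μ {k}).toReal * f k := by
    calc ∫ k, f k ∂μ = ∫ k in (↑K : Set ℕ), f k ∂μ := by rw [hKcoe, hres]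
      _ = ∑ k ∈ K, (μ {k}).toReal • f k := by simpa [Measure.real] using integral_finset K hint
      _ = ∑ k ∈ K, (μ {k}).toReal * f k := by simp [smul_eq_mul]
  -- Step B : pointwise bound
  have hpoint : ∀ k ∈ K, f k ≤
      ∑ j ∈ Finset.Ico 1 n, (if (j : ℝ) * s ≤ (k : ℝ) then 2 * (j : ℝ) * s else 0) := by
    intro k hk
    obtain ⟨hk1, hk2⟩ := Finset.mem_Icc.1 hk
    have hkpos : (0 : ℝ) < (k : ℝ) / s := div_pos (by exact_mod_cast hk1) hs0
    have hceil_pos : (0 : ℤ) < ⌈(k : ℝ) / s⌉ := Int.ceil_pos.mpr hkpos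
    set c : ℕ := (⌈(k : ℝ) / s⌉).toNat with hc_def
    have hcast : (c : ℤ) = ⌈(k : ℝ) / s⌉ := Int.toNat_of_nonneg hceil_pos.le
    have hc1 : 1 ≤ c := by omega
    have hcceil : ((c : ℕ) : ℝ) = ((⌈(k : ℝ) / s⌉ : ℤ) : ℝ) := by
      exact_mod_cast congrArg (fun z : ℤ => (z : ℝ)) hcast
    have hks : (k : ℝ) ≤ (c : ℝ) * s := by
      have h1 : (k : ℝ) / s ≤ ((⌈(k : ℝ) / s⌉ : ℤ) : ℝ) := Int.le_ceil _
      rw [← hcceil] at h1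
      calc (k : ℝ) = (k : ℝ) / s * s := by field_simp
        _ ≤ (c : ℝ) * s := mul_le_mul_of_nonneg_right h1 hs0.le
    have hck : c ≤ k := by
      have h1 : ⌈(k : ℝ) / s⌉ ≤ (k : ℤ) := by
        apply Int.ceil_le.mpr
        push_cast
        exact div_le_self (Nat.cast_nonneg k) hs1
      omega
    have hcn : c < n := lt_of_le_of_lt (le_trans hck hk2) (by omega)
    have hfk : f k = (k : ℝ) * Real.logb 2 (c : ℝ) := by
      rw [hf_def]; simp only []; rw [hcceil]
    have hlog : Real.logb 2 (c : ℝ) ≤ (c : ℝ) - 1 := logb_le_sub_one hc1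
    have hlog0 : 0 ≤ Real.logb 2 (c : ℝ) :=
      Real.logb_nonneg one_lt_two (by exact_mod_cast hc1)
    have hcm1 : (0 : ℝ) ≤ (c : ℝ) - 1 := by
      have : (1 : ℝ) ≤ (c : ℝ) := by exact_mod_cast hc1
      linarith
    have h1 : f k ≤ (c : ℝ) * s * ((c : ℝ) - 1) := by
      rw [hfk]
      calc (k : ℝ) * Real.logb 2 (c : ℝ) ≤ (k : ℝ) * ((c : ℝ) - 1) :=
            mul_le_mul_of_nonneg_left hlog (Nat.cast_nonneg k)
        _ ≤ (c : ℝ) * s * ((c : ℝ) - 1) := mul_le_mul_of_nonneg_right hks hcm1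
    -- Gauss sum
    have hgauss : ∑ j ∈ Finset.Ico 1 c, (2 * (j : ℝ) * s) = (c : ℝ) * s * ((c : ℝ) - 1) := by
      have hnat := Finset.sum_range_id_mul_two c
      have hreal : (∑ j ∈ Finset.range c, (j : ℝ)) * 2 = (c : ℝ) * ((c : ℝ) - 1) := by
        have := congrArg (fun m : ℕ => (m : ℝ)) hnat
        push_cast [Nat.cast_sub hc1] at this
        linarith [this]
      have hsplit : ∑ j ∈ Finset.range c, (2 * (j : ℝ) * s) =
          ∑ j ∈ Finset.Ico 1 c, (2 * (j : ℝ) * s) := by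
        rw [Finset.range_eq_Ico, Finset.sum_eq_sum_Ico_succ_bot (by omega : 0 < c)]
        simp
      rw [← hsplit]
      calc ∑ j ∈ Finset.range c, (2 * (j : ℝ) * s)
          = ((∑ j ∈ Finset.range c, (j : ℝ)) * 2) * s := by
            rw [Finset.sum_mul, Finset.sum_mul]
            exact Finset.sum_congr rfl fun j _ => by ring
        _ = ((c : ℝ) * ((c : ℝ) - 1)) * s := by rw [hreal]
        _ = (c : ℝ) * s * ((c : ℝ) - 1) := by ring
    have h2 : ∑ j ∈ Finset.Ico 1 c, (2 * (j : ℝ) * s) ≤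
        ∑ j ∈ Finset.Ico 1 n, (if (j : ℝ) * s ≤ (k : ℝ) then 2 * (j : ℝ) * s else 0) := by
      have hsub : Finset.Ico 1 c ⊆ Finset.Ico 1 n := Finset.Ico_subset_Ico le_rfl hcn.le
      calc ∑ j ∈ Finset.Ico 1 c, (2 * (j : ℝ) * s)
          = ∑ j ∈ Finset.Ico 1 c,
              (if (j : ℝ) * s ≤ (k : ℝ) then 2 * (j : ℝ) * s else 0) := by
            refine Finset.sum_congr rfl fun j hj => ?_
            obtain ⟨hj1, hj2⟩ := Finset.mem_Ico.1 hj
            have hjc : (j : ℤ) < ⌈(k : ℝ) / s⌉ := by omega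
            have hjr : (j : ℝ) < (k : ℝ) / s := by
              have := Int.lt_ceil.mp hjc
              exact_mod_cast this
            have : (j : ℝ) * s ≤ (k : ℝ) := ((lt_div_iff₀ hs0).1 hjr).le
            rw [if_pos this]
        _ ≤ _ := by
            refine Finset.sum_le_sum_of_subset_of_nonneg hsub fun j _ _ => ?_
            split
            · positivity
            · exact le_rfl
    calc f k ≤ (c : ℝ) * s * ((c : ℝ) - 1) := h1
      _ = ∑ j ∈ Finset.Ico 1 c, (2 * (j : ℝ) * s) := hgauss.symm
      _ ≤ _ := h2
  -- Step D/E : sum swap and tail bound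
  have hmain : ∑ k ∈ K, (μ {k}).toReal * f k ≤
      ∑ j ∈ Finset.Ico 1 n, 2 * (j : ℝ) * s * Real.exp (-0.9 * (j : ℝ) + 0.1) := by
    calc ∑ k ∈ K, (μ {k}).toReal * f k
        ≤ ∑ k ∈ K, (μ {k}).toReal *
            (∑ j ∈ Finset.Ico 1 n, (if (j : ℝ) * s ≤ (k : ℝ) then 2 * (j : ℝ) * s else 0)) :=
          Finset.sum_le_sum fun k hk =>
            mul_le_mul_of_nonneg_left (hpoint k hk) ENNReal.toReal_nonneg
      _ = ∑ j ∈ Finset.Ico 1 n, ∑ k ∈ K,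
            (μ {k}).toReal * (if (j : ℝ) * s ≤ (k : ℝ) then 2 * (j : ℝ) * s else 0) := by
          simp_rw [Finset.mul_sum]
          exact Finset.sum_comm
      _ ≤ _ := by
          refine Finset.sum_le_sum fun j hj => ?_
          obtain ⟨hj1, hj2⟩ := Finset.mem_Ico.1 hj
          set T : Finset ℕ := K.filter (fun k => (j : ℝ) * s ≤ (k : ℝ)) with hT_def
          have hstep : ∑ k ∈ K,
              (μ {k}).toReal * (if (j : ℝ) * s ≤ (k : ℝ) then 2 * (j : ℝ) * s else 0)
              = (∑ k ∈ T, (μ {k}).toReal) * (2 * (j : ℝ) * s) := by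
            rw [hT_def, Finset.sum_filter, Finset.sum_mul]
            refine Finset.sum_congr rfl fun k _ => ?_
            split <;> simp [mul_comm]
          rw [hstep]
          have hmeas : (∑ k ∈ T, (μ {k}).toReal) ≤ Real.exp (-0.9 * (j : ℝ) + 0.1) := by
            have hsum_eq : ∑ k ∈ T, μ {k} = μ (↑T : Set ℕ) := by
              rw [← Set.biUnion_of_singleton (↑T : Set ℕ), Finset.set_biUnion_coe]
              rw [measure_biUnion_finset]
              · intro a _ b _ hab
                simp [Set.disjoint_singleton, hab]
              · intro b _; exact measurableSet_singleton b
            have htoReal : ∑ k ∈ T, (μ {k}).toReal = (μ (↑T : Set ℕ)).toReal := by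
              rw [← hsum_eq, ENNReal.toReal_sum fun a _ => measure_ne_top μ _]
            rw [htoReal]
            have hsubset : (↑T : Set ℕ) ⊆ {k : ℕ | (j : ℝ) * s ≤ (k : ℝ)} := by
              intro k hkT
              simp only [hT_def, Finset.coe_filter, Set.mem_setOf_eq] at hkT
              exact hkT.2
            have hmono : μ (↑T : Set ℕ) ≤ μ {k : ℕ | (j : ℝ) * s ≤ (k : ℝ)} :=
              measure_mono hsubset
            calc (μ (↑T : Set ℕ)).toReal
                ≤ (μ {k : ℕ | (j : ℝ) * s ≤ (k : ℝ)}).toReal :=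
                  ENNReal.toReal_mono (measure_ne_top μ _) hmono
              _ ≤ Real.exp (-0.9 * (j : ℝ) + 0.1) :=
                  htail (j : ℝ) (by exact_mod_cast hj1)
          have hpos : (0 : ℝ) ≤ 2 * (j : ℝ) * s := by positivity
          calc (∑ k ∈ T, (μ {k}).toReal) * (2 * (j : ℝ) * s)
              ≤ Real.exp (-0.9 * (j : ℝ) + 0.1) * (2 * (j : ℝ) * s) :=
                mul_le_mul_of_nonneg_right hmeas hpos
            _ = 2 * (j : ℝ) * s * Real.exp (-0.9 * (j : ℝ) + 0.1) := by ring
  -- Step F : geometric series bound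
  have hfinal : ∑ j ∈ Finset.Ico 1 n, 2 * (j : ℝ) * s * Real.exp (-0.9 * (j : ℝ) + 0.1)
      ≤ 3 * Real.exp 1 * s := by
    set x : ℝ := Real.exp (-0.9) with hx_def
    have hx0 : (0 : ℝ) < x := Real.exp_pos _
    have hE : (2.2223 : ℝ) ≤ Real.exp 0.9 := by
      have h4 : Real.exp 0.9 = Real.exp 0.225 ^ (4 : ℕ) := by
        rw [← Real.exp_nat_mul]; norm_num
      have h5 : (1.225 : ℝ) ≤ Real.exp 0.225 := by
        nlinarith [Real.add_one_le_exp (0.225 : ℝ)]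
      calc (2.2223 : ℝ) ≤ (1.225 : ℝ) ^ (4 : ℕ) := by norm_num
        _ ≤ Real.exp 0.225 ^ (4 : ℕ) := by
            exact pow_le_pow_left₀ (by norm_num) h5 4
        _ = Real.exp 0.9 := h4.symm
    have hxe : x * Real.exp 0.9 = 1 := by
      rw [hx_def, ← Real.exp_add]; norm_num
    have hx45 : x ≤ 0.45 := by
      nlinarith [mul_nonneg (sub_nonneg.mpr hE) hx0.le]
    have hx1 : x < 1 := lt_of_le_of_lt hx45 (by norm_num)
    have hnorm : ‖x‖ < 1 := by rw [Real.norm_eq_abs, abs_of_pos hx0]; exact hx1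
    have hhs : HasSum (fun j : ℕ => (j : ℝ) * x ^ j) (x / (1 - x) ^ 2) :=
      hasSum_coe_mul_geometric_of_norm_lt_one hnorm
    have hle : ∑ j ∈ Finset.Ico 1 n, (j : ℝ) * x ^ j ≤ x / (1 - x) ^ 2 := by
      rw [← hhs.tsum_eq]
      exact Summable.sum_le_tsum _ (fun i _ => by positivity) hhs.summable
    have hxb : x / (1 - x) ^ 2 ≤ 1.5 := by
      have h1x : (0 : ℝ) < (1 - x) ^ 2 := by nlinarith
      rw [div_le_iff₀ h1x]
      nlinarith [sq_nonneg x, hx45, hx0.le]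
    have hrw : ∀ j : ℕ, 2 * (j : ℝ) * s * Real.exp (-0.9 * (j : ℝ) + 0.1)
        = (2 * s * Real.exp 0.1) * ((j : ℝ) * x ^ j) := by
      intro j
      have hxj : Real.exp (-0.9 * (j : ℝ)) = x ^ j := by
        rw [show (-0.9 * (j : ℝ)) = (j : ℝ) * (-0.9) by ring, Real.exp_nat_mul]
      rw [Real.exp_add, hxj]
      ring
    calc ∑ j ∈ Finset.Ico 1 n, 2 * (j : ℝ) * s * Real.exp (-0.9 * (j : ℝ) + 0.1)
        = (2 * s * Real.exp 0.1) * ∑ j ∈ Finset.Ico 1 n, (j : ℝ) * x ^ j := by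
          rw [Finset.mul_sum]
          exact Finset.sum_congr rfl fun j _ => hrw j
      _ ≤ (2 * s * Real.exp 0.1) * 1.5 :=
          mul_le_mul_of_nonneg_left (le_trans hle hxb) (by positivity)
      _ ≤ 3 * Real.exp 1 * s := by
          have he : Real.exp 0.1 ≤ Real.exp 1 := Real.exp_le_exp.mpr (by norm_num)
          nlinarith [hs0, Real.exp_pos (0.1 : ℝ)]
  calc ∫ k, f k ∂μ = ∑ k ∈ K, (μ {k}).toReal * f k := hInt_eq
    _ ≤ ∑ j ∈ Finset.Ico 1 n, 2 * (j : ℝ) * s * Real.exp (-0.9 * (j : ℝ) + 0.1) := hmain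
    _ ≤ 3 * Real.exp 1 * s := hfinal
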